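/- Let W(B_n) be the Weyl group of type B_n with generators r₀, …, r_{n−1}, and let ι : W(D_n) → W(B_n) be the embedding s₀ ↦ r₀r₁r₀, s_i ↦ r_i (i ≥ 1). If w ∈ ι(W(D_n)), then w admits a reduced expression (in the generators r₀, …, r_{n−1}) of the form ι(s_{i₁})⋯ι(s_{i_k}) where s_{i₁}⋯s_{i_k} is a reduced expression in W(D_n). -/

import Mathlib

/-- `r₀`: the signed permutation of `ℤ^(n+2)` negating the first coordinate. -/
def negFirst (n : ℕ) : Equiv.Perm (Fin (n + 2) → ℤ) :=
  Function.Involutive.toPerm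
    (fun x j => if j = 0 then -x j else x j)
    (by
      intro x; funext j
      by_cases h : j = 0 <;> simp [h])

/-- The permutation of `ℤ^(n+2)` exchanging coordinates `i` and `i+1`. -/
def swapCoord (n : ℕ) (i : Fin (n + 1)) : Equiv.Perm (Fin (n + 2) → ℤ) :=
  Equiv.arrowCongr (Equiv.swap i.castSucc i.succ) (Equiv.refl ℤ)

/-- The Coxeter generators `r₀, r₁, …, r_{n+1}` of the Weyl group `W(B_{n+2})` of signed
permutations. -/
def bGen (n : ℕ) : Fin (n + 2) → Equiv.Perm (Fin (n + 2) → ℤ) :=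
  Fin.cases (negFirst n) (fun i => swapCoord n i)

/-- The images `ι(s₀) = r₀r₁r₀`, `ι(s_i) = r_i` of the Coxeter generators of `W(D_{n+2})`
under the standard embedding `ι : W(D_{n+2}) → W(B_{n+2})`. -/
def dGen (n : ℕ) : Fin (n + 2) → Equiv.Perm (Fin (n + 2) → ℤ) :=
  Fin.cases (negFirst n * swapCoord n 0 * negFirst n) (fun i => swapCoord n i)

/-- The word over the `B`-generators spelling out an image `ι(s_j)`: `ι(s₀)` expands to the
word `r₀ r₁ r₀` and `ι(s_i) = r_i` for `i ≥ 1`. -/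
def expandD (n : ℕ) : Fin (n + 2) → List (Fin (n + 2)) :=
  Fin.cases [0, 1, 0] (fun i => [i.succ])

namespace St7
variable {n : ℕ}

def ind (p : Prop) [Decidable p] : ℕ := if p then 1 else 0

lemma ind_congr {p q : Prop} [Decidable p] [Decidable q] (h : p ↔ q) : ind p = ind q := by
  simp [ind, h]

lemma ind_le {p : Prop} [Decidable p] : ind p ≤ 1 := by simp [ind]; split_ifs <;> omega

lemma ind_true {p : Prop} [Decidable p] (h : p) : ind p = 1 := by simp [ind, h]
lemma ind_false {p : Prop} [Decidable p] (h : ¬ p) : ind p = 0 := by simp [ind, h]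
lemma ind_pair {a b : ℤ} (h : a ≠ b) : ind (a < b) + ind (b < a) = 1 := by
  simp only [ind]; split_ifs <;> omega

def inv (v : Fin (n+2) → ℤ) : ℕ :=
  ∑ p : Fin (n+2) × Fin (n+2), ind (p.1 < p.2 ∧ v p.2 < v p.1)

def mterm (x : ℤ) : ℕ := if x < 0 then (-x - 1).toNat else 0

def negsm (v : Fin (n+2) → ℤ) : ℕ := ∑ j, mterm (v j)
def negc (v : Fin (n+2) → ℤ) : ℕ := ∑ j, ind (v j < 0)
def lD (v : Fin (n+2) → ℤ) : ℕ := inv v + negsm v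
def lB (v : Fin (n+2) → ℤ) : ℕ := inv v + negsm v + negc v

def Wn (v : Fin (n+2) → ℤ) : Prop :=
  ∃ σ : Equiv.Perm (Fin (n+2)), ∀ j, |v j| = (σ j : ℤ) + 1

def sg (x : ℤ) : ℤ := if x < 0 then -1 else 1

def Rel (w : Equiv.Perm (Fin (n+2) → ℤ)) (v : Fin (n+2) → ℤ) : Prop :=
  ∃ σ : Equiv.Perm (Fin (n+2)), (∀ j, |v j| = (σ j : ℤ) + 1) ∧
    ∀ (x : Fin (n+2) → ℤ) (j : Fin (n+2)), w x j = sg (v j) * x (σ j)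

lemma Rel.wn {w} {v : Fin (n+2) → ℤ} (h : Rel w v) : Wn v := ⟨h.choose, h.choose_spec.1⟩

def t0 (v : Fin (n+2) → ℤ) : Fin (n+2) → ℤ := fun j => if j = 0 then -(v 0) else v j
def s0op (v : Fin (n+2) → ℤ) : Fin (n+2) → ℤ :=
  fun j => if j = 0 then -(v 1) else if j = 1 then -(v 0) else v j
def swop (i : Fin (n+1)) (v : Fin (n+2) → ℤ) : Fin (n+2) → ℤ :=
  v ∘ (Equiv.swap i.castSucc i.succ)

lemma Wn.abs_pos {v : Fin (n+2) → ℤ} (h : Wn v) (j) : 1 ≤ |v j| := by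
  obtain ⟨σ, hσ⟩ := h; rw [hσ]
  have : (0:ℤ) ≤ (σ j : ℤ) := Int.ofNat_nonneg _
  omega

lemma Wn.ne_zero {v : Fin (n+2) → ℤ} (h : Wn v) (j) : v j ≠ 0 := by
  intro hj; have := h.abs_pos j; rw [hj] at this; simp at this

lemma Wn.abs_le {v : Fin (n+2) → ℤ} (h : Wn v) (j) : |v j| ≤ (n+2 : ℤ) := by
  obtain ⟨σ, hσ⟩ := h; rw [hσ]
  have := (σ j).isLt; omega

lemma Wn.abs_ne {v : Fin (n+2) → ℤ} (h : Wn v) {j k : Fin (n+2)} (hjk : j ≠ k) :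
    |v j| ≠ |v k| := by
  obtain ⟨σ, hσ⟩ := h; rw [hσ, hσ]
  intro he
  have : ((σ j : ℕ) : ℤ) = ((σ k : ℕ) : ℤ) := by omega
  exact hjk (σ.injective (Fin.ext (by exact_mod_cast this)))

lemma t0_t0 (v : Fin (n+2) → ℤ) : t0 (t0 v) = v := by
  funext j; simp only [t0]; split_ifs with h <;> simp [h]

lemma s0op_s0op (v : Fin (n+2) → ℤ) : s0op (s0op v) = v := by
  have h10 : (1 : Fin (n+2)) ≠ 0 := by simp [Fin.ext_iff]
  funext j; simp only [s0op]
  split_ifs with h1 h2 <;> simp_all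

lemma swop_swop (i : Fin (n+1)) (v : Fin (n+2) → ℤ) : swop i (swop i v) = v := by
  funext j; simp [swop, Equiv.swap_apply_self]

lemma Wn.t0 {v : Fin (n+2) → ℤ} (h : Wn v) : Wn (t0 v) := by
  obtain ⟨σ, hσ⟩ := h
  exact ⟨σ, fun j => by simp only [St7.t0]; split_ifs with hj <;> simp [hj, hσ]⟩

lemma Wn.s0op {v : Fin (n+2) → ℤ} (h : Wn v) : Wn (s0op v) := by
  obtain ⟨σ, hσ⟩ := h
  refine ⟨(Equiv.swap 0 1).trans σ, fun j => ?_⟩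
  have h10 : (1 : Fin (n+2)) ≠ 0 := by simp [Fin.ext_iff]
  simp only [St7.s0op, Equiv.trans_apply]
  split_ifs with h1 h2
  · subst h1; rw [Equiv.swap_apply_left]; simp [hσ]
  · subst h2; rw [Equiv.swap_apply_right]; simp [hσ]
  · rw [Equiv.swap_apply_of_ne_of_ne h1 h2]; exact hσ j

lemma Wn.swop {v : Fin (n+2) → ℤ} (h : Wn v) (i : Fin (n+1)) : Wn (swop i v) := by
  obtain ⟨σ, hσ⟩ := h
  exact ⟨(Equiv.swap i.castSucc i.succ).trans σ, fun j => hσ _⟩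


lemma sum1 (f : Fin (n+2) → ℕ) : ∑ j, f j = f 0 + ∑ j : Fin (n+1), f j.succ :=
  Fin.sum_univ_succ f

lemma sum2 (f : Fin (n+2) → ℕ) : ∑ j, f j = f 0 + f 1 + ∑ j : Fin n, f j.succ.succ := by
  rw [Fin.sum_univ_succ, Fin.sum_univ_succ, Fin.succ_zero_eq_one]; omega

lemma card_lt (m : ℕ) (hm : m ≤ n+2) : (∑ k : Fin (n+2), ind ((k:ℕ) < m)) = m := by
  rw [Fin.sum_univ_eq_sum_range (fun t => ind (t < m))]
  have : ∑ t ∈ Finset.range (n+2), ind (t < m)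
      = ∑ t ∈ (Finset.range (n+2)).filter (fun t => t < m), 1 := by
    rw [Finset.sum_filter]; rfl
  rw [this]
  have : (Finset.range (n+2)).filter (fun t => t < m) = Finset.range m := by
    ext t; simp only [Finset.mem_filter, Finset.mem_range]; omega
  simp [this]

lemma kall {v : Fin (n+2) → ℤ} (h : Wn v) {c : ℤ} (h1 : 1 ≤ c) (h2 : c ≤ (n+2:ℤ)) :
    (∑ j, ind (|v j| < c)) = (c - 1).toNat := by
  obtain ⟨σ, hσ⟩ := h
  calc (∑ j, ind (|v j| < c)) = ∑ j, ind (((σ j : ℕ) : ℤ) + 1 < c) :=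
        Finset.sum_congr rfl fun j _ => ind_congr (by rw [hσ])
    _ = ∑ k : Fin (n+2), ind (((k:ℕ):ℤ) + 1 < c) := Equiv.sum_comp σ (fun k : Fin (n+2) => ind (((k:ℕ):ℤ) + 1 < c))
    _ = ∑ k : Fin (n+2), ind ((k:ℕ) < (c-1).toNat) :=
        Finset.sum_congr rfl fun k _ => ind_congr (by omega)
    _ = (c-1).toNat := card_lt _ (by omega)

lemma ind_split {a x : ℤ} (ha : 0 < a) (hx : |x| ≠ a) :
    ind (x < a) = ind (x < -a) + ind (|x| < a) := by
  rcases le_or_gt 0 x with h | h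
  · rw [abs_of_nonneg h] at *; simp only [ind]; split_ifs <;> omega
  · rw [abs_of_neg h] at *; simp only [ind]; split_ifs <;> omega

def invR1 (v : Fin (n+2) → ℤ) : ℕ :=
  ∑ i : Fin (n+1), ∑ j, ind (i.succ < j ∧ v j < v i.succ)

lemma inv_eq1 (v : Fin (n+2) → ℤ) :
    inv v = (∑ j : Fin (n+1), ind (v j.succ < v 0)) + invR1 v := by
  rw [inv, Fintype.sum_prod_type, sum1 (fun i => ∑ j, ind (i < j ∧ v j < v i))]
  congr 1
  rw [sum1 (fun j => ind ((0:Fin (n+2)) < j ∧ v j < v 0))]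
  rw [ind_false (by simp), zero_add]
  exact Finset.sum_congr rfl fun j _ => ind_congr (by simp [Fin.succ_pos])

lemma invR1_t0 (v : Fin (n+2) → ℤ) : invR1 (t0 v) = invR1 v := by
  refine Finset.sum_congr rfl fun i _ => Finset.sum_congr rfl fun j _ => ?_
  by_cases hij : i.succ < j
  · have hj : j ≠ 0 := Fin.pos_iff_ne_zero.mp (lt_trans (Fin.succ_pos i) hij)
    simp only [t0, if_neg hj, if_neg (Fin.succ_ne_zero i)]
  · rw [ind_false (by tauto), ind_false (by tauto)]

lemma inv_t0 {v : Fin (n+2) → ℤ} (hW : Wn v) (h : 0 < v 0) :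
    inv v = inv (t0 v) + (v 0 - 1).toNat := by
  have habs0 : |v 0| = v 0 := abs_of_pos h
  have hc1 : (1:ℤ) ≤ v 0 := by have := hW.abs_pos 0; omega
  have hc2 : v 0 ≤ (n+2:ℤ) := by have := hW.abs_le 0; omega
  have ht0 : t0 v 0 = -(v 0) := by simp [t0]
  have hts : ∀ j : Fin (n+1), t0 v j.succ = v j.succ := fun j => by
    simp [t0, Fin.succ_ne_zero]
  rw [inv_eq1, inv_eq1 (t0 v), invR1_t0]
  have hsplit : (∑ j : Fin (n+1), ind (v j.succ < v 0))
      = (∑ j : Fin (n+1), ind (v j.succ < -(v 0)))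
        + ∑ j : Fin (n+1), ind (|v j.succ| < v 0) := by
    rw [← Finset.sum_add_distrib]
    refine Finset.sum_congr rfl fun j _ => ind_split h ?_
    rw [← habs0]; exact hW.abs_ne (Fin.succ_ne_zero j)
  have hk : (∑ j : Fin (n+1), ind (|v j.succ| < v 0)) = (v 0 - 1).toNat := by
    have := kall hW hc1 hc2
    rw [sum1 (fun j => ind (|v j| < v 0)), ind_false (by rw [habs0]; exact lt_irrefl _),
      zero_add] at this
    exact this
  have he : (∑ j : Fin (n+1), ind (t0 v j.succ < t0 v 0))
      = ∑ j : Fin (n+1), ind (v j.succ < -(v 0)) :=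
    Finset.sum_congr rfl fun j _ => ind_congr (by rw [hts, ht0])
  rw [he, hsplit, hk]; ring

lemma negsm_t0 {v : Fin (n+2) → ℤ} (h : 0 < v 0) :
    negsm (t0 v) = negsm v + (v 0 - 1).toNat := by
  rw [negsm, negsm, sum1 (fun j => mterm (t0 v j)), sum1 (fun j => mterm (v j))]
  have h1 : mterm (t0 v 0) = (v 0 - 1).toNat := by
    have ht0 : t0 v 0 = -(v 0) := by simp [t0]
    rw [ht0]; simp only [mterm, if_pos (show -(v 0) < 0 by omega)]
    congr 1; ring
  have h2 : mterm (v 0) = 0 := by simp [mterm, not_lt.mpr (le_of_lt h)]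
  have h3 : ∀ j : Fin (n+1), mterm (t0 v j.succ) = mterm (v j.succ) := fun j => by
    simp [t0, Fin.succ_ne_zero]
  rw [h1, h2, Finset.sum_congr rfl fun j _ => h3 j]; omega

lemma negc_t0 {v : Fin (n+2) → ℤ} (h : 0 < v 0) :
    negc (t0 v) = negc v + 1 := by
  rw [negc, negc, sum1 (fun j => ind (t0 v j < 0)), sum1 (fun j => ind (v j < 0))]
  have h1 : ind (t0 v 0 < 0) = 1 := ind_true (by simp [t0]; omega)
  have h2 : ind (v 0 < 0) = 0 := ind_false (by omega)
  have h3 : ∀ j : Fin (n+1), ind (t0 v j.succ < 0) = ind (v j.succ < 0) := fun j =>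
    ind_congr (by simp [t0, Fin.succ_ne_zero])
  rw [h1, h2, Finset.sum_congr rfl fun j _ => h3 j]; omega

lemma lB_t0_pos {v : Fin (n+2) → ℤ} (hW : Wn v) (h : 0 < v 0) :
    lB (t0 v) = lB v + 1 := by
  have h1 := inv_t0 hW h
  have h2 := negsm_t0 h
  have h3 := negc_t0 h
  simp only [lB]; omega

lemma lB_t0_le {v : Fin (n+2) → ℤ} (hW : Wn v) : lB (t0 v) ≤ lB v + 1 := by
  rcases lt_or_gt_of_ne (hW.ne_zero 0) with h | h
  · have h0 : 0 < t0 v 0 := by simp [t0]; omega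
    have := lB_t0_pos hW.t0 h0
    rw [t0_t0] at this; omega
  · exact le_of_eq (lB_t0_pos hW h)


def T (v : Fin (n+2) → ℤ) (c : ℤ) : ℕ := ∑ j : Fin n, ind (v j.succ.succ < c)
def R2 (v : Fin (n+2) → ℤ) : ℕ :=
  ∑ i : Fin n, ∑ j, ind (i.succ.succ < j ∧ v j < v i.succ.succ)
def negsmR (v : Fin (n+2) → ℤ) : ℕ := ∑ j : Fin n, mterm (v j.succ.succ)
def negcR (v : Fin (n+2) → ℤ) : ℕ := ∑ j : Fin n, ind (v j.succ.succ < 0)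

lemma fin01 : (0 : Fin (n+2)) < 1 := by
  rw [Fin.lt_def]; simp [Fin.val_one]

lemma fin10 : ¬ ((1 : Fin (n+2)) < 0) := by
  rw [Fin.lt_def]; simp

lemma fin1ss (j : Fin n) : (1 : Fin (n+2)) < j.succ.succ := by
  rw [Fin.lt_def]; simp [Fin.val_one, Fin.val_succ]

lemma finssne1 (j : Fin n) : j.succ.succ ≠ (1 : Fin (n+2)) := by
  intro h
  have := congrArg Fin.val h
  simp only [Fin.val_succ, Fin.val_one] at this
  omega

lemma fin_ne10 : (1 : Fin (n+2)) ≠ 0 := by simp [Fin.ext_iff]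

lemma s0op_0 (v : Fin (n+2) → ℤ) : s0op v 0 = -(v 1) := by simp [s0op]
lemma s0op_1 (v : Fin (n+2) → ℤ) : s0op v 1 = -(v 0) := by simp [s0op, fin_ne10]
lemma s0op_ss (v : Fin (n+2) → ℤ) (j : Fin n) : s0op v j.succ.succ = v j.succ.succ := by
  simp [s0op, Fin.succ_ne_zero, finssne1]

lemma inv_eq2 (v : Fin (n+2) → ℤ) :
    inv v = ind (v 1 < v 0) + T v (v 0) + T v (v 1) + R2 v := by
  rw [inv, Fintype.sum_prod_type, sum2 (fun i => ∑ j, ind (i < j ∧ v j < v i))]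
  have hF0 : (∑ j, ind ((0:Fin (n+2)) < j ∧ v j < v 0))
      = ind (v 1 < v 0) + T v (v 0) := by
    rw [sum2 (fun j => ind ((0:Fin (n+2)) < j ∧ v j < v 0)),
      ind_false (by simp), zero_add]
    congr 1
    · exact ind_congr (by simp [fin01])
    · exact Finset.sum_congr rfl fun j _ => ind_congr (by simp [Fin.succ_pos])
  have hF1 : (∑ j, ind ((1:Fin (n+2)) < j ∧ v j < v 1)) = T v (v 1) := by
    have z0 : ind ((1:Fin (n+2)) < 0 ∧ v 0 < v 1) = 0 := ind_false (by simp [fin10])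
    have z1 : ind ((1:Fin (n+2)) < 1 ∧ v 1 < v 1) = 0 := ind_false (by simp)
    rw [sum2 (fun j => ind ((1:Fin (n+2)) < j ∧ v j < v 1)), z0, z1, zero_add, zero_add]
    exact Finset.sum_congr rfl fun j _ => ind_congr (by simp [fin1ss])
  rw [hF0, hF1]
  unfold R2
  ring

lemma T_s0 (v : Fin (n+2) → ℤ) (c : ℤ) : T (s0op v) c = T v c :=
  Finset.sum_congr rfl fun j _ => ind_congr (by rw [s0op_ss])

lemma R2_s0 (v : Fin (n+2) → ℤ) : R2 (s0op v) = R2 v := by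
  refine Finset.sum_congr rfl fun i _ => Finset.sum_congr rfl fun j _ => ?_
  by_cases hij : i.succ.succ < j
  · have hj0 : j ≠ 0 := by
      intro hj; rw [hj] at hij; exact absurd hij (by simp [Fin.lt_def])
    have hj1 : j ≠ 1 := by
      intro hj; rw [hj] at hij
      exact absurd hij (by rw [Fin.lt_def]; simp [Fin.val_one, Fin.val_succ])
    simp only [s0op, if_neg hj0, if_neg hj1, if_neg (Fin.succ_ne_zero _),
      if_neg (finssne1 _)]
  · rw [ind_false (by tauto), ind_false (by tauto)]

lemma negsm_eq2 (v : Fin (n+2) → ℤ) :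
    negsm v = mterm (v 0) + mterm (v 1) + negsmR v :=
  sum2 (fun j => mterm (v j))

lemma negc_eq2 (v : Fin (n+2) → ℤ) :
    negc v = ind (v 0 < 0) + ind (v 1 < 0) + negcR v :=
  sum2 (fun j => ind (v j < 0))

lemma negsmR_s0 (v : Fin (n+2) → ℤ) : negsmR (s0op v) = negsmR v :=
  Finset.sum_congr rfl fun j _ => by rw [s0op_ss]

lemma negcR_s0 (v : Fin (n+2) → ℤ) : negcR (s0op v) = negcR v :=
  Finset.sum_congr rfl fun j _ => ind_congr (by rw [s0op_ss])

lemma mterm_neg {x : ℤ} (h : 0 < x) : mterm (-x) = (x - 1).toNat := by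
  simp only [mterm, if_pos (show -x < 0 by omega)]; congr 1; ring

lemma mterm_nonneg {x : ℤ} (h : 0 ≤ x) : mterm x = 0 := by
  simp [mterm, not_lt.mpr h]

lemma Tdiff0 {v : Fin (n+2) → ℤ} (hW : Wn v) :
    T v (|v 0|) + ind (|v 1| < |v 0|) = T v (-(|v 0|)) + (|v 0| - 1).toNat := by
  have hpos : 0 < |v 0| := hW.abs_pos 0
  have hsplit : T v (|v 0|) = T v (-(|v 0|)) + ∑ j : Fin n, ind (|v j.succ.succ| < |v 0|) := by
    rw [T, T, ← Finset.sum_add_distrib]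
    exact Finset.sum_congr rfl fun j _ =>
      ind_split hpos (hW.abs_ne (by simp [Fin.ext_iff, Fin.val_succ]))
  have hk := kall hW (hW.abs_pos 0) (hW.abs_le 0)
  rw [sum2 (fun j => ind (|v j| < |v 0|)), ind_false (lt_irrefl _)] at hk
  omega

lemma Tdiff1 {v : Fin (n+2) → ℤ} (hW : Wn v) :
    T v (|v 1|) + ind (|v 0| < |v 1|) = T v (-(|v 1|)) + (|v 1| - 1).toNat := by
  have hpos : 0 < |v 1| := hW.abs_pos 1
  have hsplit : T v (|v 1|) = T v (-(|v 1|)) + ∑ j : Fin n, ind (|v j.succ.succ| < |v 1|) := by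
    rw [T, T, ← Finset.sum_add_distrib]
    exact Finset.sum_congr rfl fun j _ =>
      ind_split hpos (hW.abs_ne (finssne1 j))
  have hk := kall hW (hW.abs_pos 1) (hW.abs_le 1)
  rw [sum2 (fun j => ind (|v j| < |v 1|)), ind_false (lt_irrefl _)] at hk
  omega


lemma s0_pp {v : Fin (n+2) → ℤ} (hW : Wn v) (h0 : 0 < v 0) (h1 : 0 < v 1) :
    lD (s0op v) = lD v + 1 ∧ lB (s0op v) = lB v + 3 ∧ negc (s0op v) = negc v + 2 := by
  have ha0 : |v 0| = v 0 := abs_of_pos h0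
  have ha1 : |v 1| = v 1 := abs_of_pos h1
  have hne : v 0 ≠ v 1 := by
    have := hW.abs_ne (fin_ne10).symm; rw [ha0, ha1] at this; exact this
  have E1 := inv_eq2 v
  have E2 := inv_eq2 (s0op v)
  rw [s0op_0, s0op_1, T_s0, T_s0, R2_s0,
    ind_congr (neg_lt_neg_iff : -(v 0) < -(v 1) ↔ v 1 < v 0)] at E2
  have E3 := Tdiff0 hW; rw [ha0, ha1] at E3
  have E4 := Tdiff1 hW; rw [ha0, ha1] at E4
  have E5 := ind_pair hne
  have N1 := negsm_eq2 v
  have N2 := negsm_eq2 (s0op v)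
  rw [s0op_0, s0op_1, negsmR_s0, mterm_neg h1, mterm_neg h0] at N2
  rw [mterm_nonneg h0.le, mterm_nonneg h1.le] at N1
  have C1 := negc_eq2 v
  have C2 := negc_eq2 (s0op v)
  rw [s0op_0, s0op_1, negcR_s0, ind_true (by omega : -(v 1) < 0),
    ind_true (by omega : -(v 0) < 0)] at C2
  rw [ind_false (by omega : ¬ v 0 < 0), ind_false (by omega : ¬ v 1 < 0)] at C1
  simp only [lD, lB]
  omega

lemma s0_nn {v : Fin (n+2) → ℤ} (hW : Wn v) (h0 : v 0 < 0) (h1 : v 1 < 0) :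
    lD v = lD (s0op v) + 1 ∧ lB v = lB (s0op v) + 3 ∧ negc v = negc (s0op v) + 2 := by
  have h0' : 0 < s0op v 0 := by rw [s0op_0]; omega
  have h1' : 0 < s0op v 1 := by rw [s0op_1]; omega
  have := s0_pp hW.s0op h0' h1'
  rwa [s0op_s0op] at this

lemma s0_pm {v : Fin (n+2) → ℤ} (hW : Wn v) (h0 : 0 < v 0) (h1 : v 1 < 0) :
    lD (s0op v) + ind (v 0 < -(v 1)) = lD v + ind (-(v 1) < v 0) ∧
    lB (s0op v) + ind (v 0 < -(v 1)) = lB v + ind (-(v 1) < v 0) ∧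
    negc (s0op v) = negc v := by
  have ha0 : |v 0| = v 0 := abs_of_pos h0
  have ha1 : |v 1| = -(v 1) := abs_of_neg h1
  have hne : v 0 ≠ -(v 1) := by
    have := hW.abs_ne (fin_ne10).symm; rw [ha0, ha1] at this; exact this
  have E1 := inv_eq2 v
  have E2 := inv_eq2 (s0op v)
  rw [s0op_0, s0op_1, T_s0, T_s0, R2_s0] at E2
  rw [ind_true (by omega : -(v 0) < -(v 1))] at E2
  rw [ind_true (by omega : v 1 < v 0)] at E1
  have E3 := Tdiff0 hW; rw [ha0, ha1] at E3
  have E4 := Tdiff1 hW; rw [ha0, ha1, neg_neg] at E4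
  have E5 := ind_pair hne
  have N1 := negsm_eq2 v
  have N2 := negsm_eq2 (s0op v)
  rw [s0op_0, s0op_1, negsmR_s0, mterm_nonneg (by omega : (0:ℤ) ≤ -(v 1)),
    mterm_neg h0] at N2
  rw [mterm_nonneg h0.le] at N1
  have hm1 : mterm (v 1) = (-(v 1) - 1).toNat := by
    rw [show v 1 = -(-(v 1)) by ring, mterm_neg (by omega)]; ring_nf
  rw [hm1] at N1
  have C1 := negc_eq2 v
  have C2 := negc_eq2 (s0op v)
  rw [s0op_0, s0op_1, negcR_s0, ind_false (by omega : ¬ -(v 1) < 0),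
    ind_true (by omega : -(v 0) < 0)] at C2
  rw [ind_false (by omega : ¬ v 0 < 0), ind_true h1] at C1
  simp only [lD, lB]
  omega

lemma s0_np {v : Fin (n+2) → ℤ} (hW : Wn v) (h0 : v 0 < 0) (h1 : 0 < v 1) :
    lD (s0op v) + ind (v 1 < -(v 0)) = lD v + ind (-(v 0) < v 1) ∧
    lB (s0op v) + ind (v 1 < -(v 0)) = lB v + ind (-(v 0) < v 1) ∧
    negc (s0op v) = negc v := by
  have ha0 : |v 0| = -(v 0) := abs_of_neg h0
  have ha1 : |v 1| = v 1 := abs_of_pos h1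
  have hne : -(v 0) ≠ v 1 := by
    have := hW.abs_ne (fin_ne10).symm; rw [ha0, ha1] at this; exact this
  have E1 := inv_eq2 v
  have E2 := inv_eq2 (s0op v)
  rw [s0op_0, s0op_1, T_s0, T_s0, R2_s0] at E2
  rw [ind_false (by omega : ¬ -(v 0) < -(v 1))] at E2
  rw [ind_false (by omega : ¬ v 1 < v 0)] at E1
  have E3 := Tdiff0 hW; rw [ha0, ha1, neg_neg] at E3
  have E4 := Tdiff1 hW; rw [ha0, ha1] at E4
  have E5 := ind_pair hne
  have N1 := negsm_eq2 v
  have N2 := negsm_eq2 (s0op v)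
  rw [s0op_0, s0op_1, negsmR_s0, mterm_neg h1,
    mterm_nonneg (by omega : (0:ℤ) ≤ -(v 0))] at N2
  rw [mterm_nonneg h1.le] at N1
  have hm0 : mterm (v 0) = (-(v 0) - 1).toNat := by
    rw [show v 0 = -(-(v 0)) by ring, mterm_neg (by omega)]; ring_nf
  rw [hm0] at N1
  have C1 := negc_eq2 v
  have C2 := negc_eq2 (s0op v)
  rw [s0op_0, s0op_1, negcR_s0, ind_true (by omega : -(v 1) < 0),
    ind_false (by omega : ¬ -(v 0) < 0)] at C2
  rw [ind_true h0, ind_false (by omega : ¬ v 1 < 0)] at C1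
  simp only [lD, lB]
  omega

lemma lD_s0_le {v : Fin (n+2) → ℤ} (hW : Wn v) :
    lD v ≤ lD (s0op v) + 1 ∧ (Even (negc (s0op v)) ↔ Even (negc v)) := by
  rcases lt_or_gt_of_ne (hW.ne_zero 0) with h0 | h0 <;>
    rcases lt_or_gt_of_ne (hW.ne_zero 1) with h1 | h1
  · obtain ⟨hd, _, hc⟩ := s0_nn hW h0 h1
    constructor
    · omega
    · rw [hc]; simp [Nat.even_add]
  · obtain ⟨hd, _, hc⟩ := s0_np hW h0 h1
    have := ind_le (p := v 1 < -(v 0))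
    exact ⟨by omega, by rw [hc]⟩
  · obtain ⟨hd, _, hc⟩ := s0_pm hW h0 h1
    have := ind_le (p := v 0 < -(v 1))
    exact ⟨by omega, by rw [hc]⟩
  · obtain ⟨hd, _, hc⟩ := s0_pp hW h0 h1
    constructor
    · omega
    · rw [hc]; simp [Nat.even_add]


lemma swap_lt_iff (i : Fin (n+1)) (a b : Fin (n+2))
    (h1 : ¬ (a = i.castSucc ∧ b = i.succ)) (h2 : ¬ (a = i.succ ∧ b = i.castSucc)) :
    (Equiv.swap i.castSucc i.succ a < Equiv.swap i.castSucc i.succ b ↔ a < b) := by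
  have hxy : (i.castSucc : ℕ) + 1 = (i.succ : ℕ) := by
    simp [Fin.coe_castSucc, Fin.val_succ]
  simp only [Equiv.swap_apply_def]
  split_ifs <;> (try simp only [Fin.lt_def, Fin.ext_iff, not_and] at *) <;> omega

def Fsw (v : Fin (n+2) → ℤ) (i : Fin (n+1)) : Fin (n+2) × Fin (n+2) → ℕ :=
  fun p => ind (Equiv.swap i.castSucc i.succ p.1 < Equiv.swap i.castSucc i.succ p.2
    ∧ v p.2 < v p.1)

def Gsw (v : Fin (n+2) → ℤ) : Fin (n+2) × Fin (n+2) → ℕ :=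
  fun p => ind (p.1 < p.2 ∧ v p.2 < v p.1)

lemma inv_swop (v : Fin (n+2) → ℤ) (i : Fin (n+1)) :
    inv (swop i v) + ind (v i.succ < v i.castSucc)
      = inv v + ind (v i.castSucc < v i.succ) := by
  have hxltY : i.castSucc < i.succ := (Fin.castSucc_lt_succ : i.castSucc < i.succ)
  have hne : i.castSucc ≠ i.succ := ne_of_lt hxltY
  have key : inv (swop i v) = ∑ p : Fin (n+2) × Fin (n+2), Fsw v i p := by
    rw [inv, ← Equiv.sum_comp (Equiv.prodCongr (Equiv.swap i.castSucc i.succ)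
      (Equiv.swap i.castSucc i.succ)) (Fsw v i)]
    refine Finset.sum_congr rfl fun p _ => ?_
    simp only [Fsw, Equiv.prodCongr_apply, Prod.map, Equiv.swap_apply_self]
    exact ind_congr (by simp [swop])
  have hinv : inv v = ∑ p : Fin (n+2) × Fin (n+2), Gsw v p := rfl
  have hne21 : ((i.succ, i.castSucc) : Fin (n+2) × Fin (n+2)) ≠ (i.castSucc, i.succ) :=
    fun h => hne (congrArg Prod.snd h)
  have hmem1 : ((i.castSucc, i.succ) : Fin (n+2) × Fin (n+2)) ∈
      (Finset.univ : Finset (Fin (n+2) × Fin (n+2))) := Finset.mem_univ _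
  have hmem2 : ((i.succ, i.castSucc) : Fin (n+2) × Fin (n+2)) ∈
      (Finset.univ.erase (i.castSucc, i.succ)) :=
    Finset.mem_erase.mpr ⟨hne21, Finset.mem_univ _⟩
  have hsplitF : (∑ p : Fin (n+2) × Fin (n+2), Fsw v i p)
      = Fsw v i (i.castSucc, i.succ) + (Fsw v i (i.succ, i.castSucc)
        + ∑ p ∈ (Finset.univ.erase (i.castSucc, i.succ)).erase (i.succ, i.castSucc),
            Fsw v i p) := by
    rw [Finset.add_sum_erase _ (Fsw v i) hmem2, Finset.add_sum_erase _ (Fsw v i) hmem1]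
  have hsplitG : (∑ p : Fin (n+2) × Fin (n+2), Gsw v p)
      = Gsw v (i.castSucc, i.succ) + (Gsw v (i.succ, i.castSucc)
        + ∑ p ∈ (Finset.univ.erase (i.castSucc, i.succ)).erase (i.succ, i.castSucc),
            Gsw v p) := by
    rw [Finset.add_sum_erase _ (Gsw v) hmem2, Finset.add_sum_erase _ (Gsw v) hmem1]
  have hFG : ∀ p ∈ (Finset.univ.erase (i.castSucc, i.succ)).erase
      ((i.succ, i.castSucc) : Fin (n+2) × Fin (n+2)), Fsw v i p = Gsw v p := by
    intro p hp
    have hp' := Finset.mem_erase.mp hp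
    have hp2 := hp'.1
    have hp1 := (Finset.mem_erase.mp hp'.2).1
    refine ind_congr (and_congr_left' (swap_lt_iff i p.1 p.2 ?_ ?_))
    · rintro ⟨ha, hb⟩; exact hp1 (Prod.ext ha hb)
    · rintro ⟨ha, hb⟩; exact hp2 (Prod.ext ha hb)
  have hS : (∑ p ∈ (Finset.univ.erase (i.castSucc, i.succ)).erase
        ((i.succ, i.castSucc) : Fin (n+2) × Fin (n+2)), Fsw v i p)
      = (∑ p ∈ (Finset.univ.erase (i.castSucc, i.succ)).erase
        ((i.succ, i.castSucc) : Fin (n+2) × Fin (n+2)), Gsw v p) :=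
    Finset.sum_congr rfl hFG
  have hF1 : Fsw v i (i.castSucc, i.succ) = 0 := by
    refine ind_false ?_
    rw [Equiv.swap_apply_left, Equiv.swap_apply_right]
    rintro ⟨h, -⟩; exact absurd h (not_lt.mpr hxltY.le)
  have hF2 : Fsw v i (i.succ, i.castSucc) = ind (v i.castSucc < v i.succ) := by
    refine ind_congr ?_
    rw [Equiv.swap_apply_left, Equiv.swap_apply_right]
    exact and_iff_right hxltY
  have hG1 : Gsw v (i.castSucc, i.succ) = ind (v i.succ < v i.castSucc) :=
    ind_congr (and_iff_right hxltY)
  have hG2 : Gsw v (i.succ, i.castSucc) = 0 := by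
    refine ind_false ?_
    rintro ⟨h, -⟩; exact absurd h (not_lt.mpr hxltY.le)
  omega

lemma negsm_swop (v : Fin (n+2) → ℤ) (i : Fin (n+1)) : negsm (swop i v) = negsm v :=
  Equiv.sum_comp (Equiv.swap i.castSucc i.succ) (fun j => mterm (v j))

lemma negc_swop (v : Fin (n+2) → ℤ) (i : Fin (n+1)) : negc (swop i v) = negc v :=
  Equiv.sum_comp (Equiv.swap i.castSucc i.succ) (fun j => ind (v j < 0))

lemma sw_desc {v : Fin (n+2) → ℤ} {i : Fin (n+1)} (h : v i.succ < v i.castSucc) :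
    lD (swop i v) + 1 = lD v ∧ lB (swop i v) + 1 = lB v := by
  have h1 := inv_swop v i
  rw [ind_true h, ind_false (not_lt.mpr (le_of_lt h))] at h1
  have h2 := negsm_swop v i
  have h3 := negc_swop v i
  simp only [lD, lB]; omega

lemma sw_asc {v : Fin (n+2) → ℤ} {i : Fin (n+1)} (h : v i.castSucc < v i.succ) :
    lD (swop i v) = lD v + 1 ∧ lB (swop i v) = lB v + 1 := by
  have h1 := inv_swop v i
  rw [ind_true h, ind_false (not_lt.mpr (le_of_lt h))] at h1
  have h2 := negsm_swop v i
  have h3 := negc_swop v i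
  simp only [lD, lB]; omega


def idw : Fin (n+2) → ℤ := fun j => (j : ℤ) + 1

lemma sg_one {x : ℤ} (h : 0 ≤ x) : sg x = 1 := by rw [sg, if_neg (not_lt.mpr h)]
lemma sg_neg {x : ℤ} (h : x ≠ 0) : sg (-x) = -sg x := by
  simp only [sg]; split_ifs <;> omega
lemma sg_mul_abs (x : ℤ) : sg x * |x| = x := by
  rcases le_or_gt 0 x with h | h
  · rw [sg_one h, abs_of_nonneg h, one_mul]
  · rw [abs_of_neg h]; simp [sg, h]

lemma sg_ne_zero (x : ℤ) : sg x ≠ 0 := by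
  simp only [sg]; split_ifs <;> norm_num

lemma rel_one : Rel (1 : Equiv.Perm (Fin (n+2) → ℤ)) idw := by
  refine ⟨1, fun j => ?_, fun x j => ?_⟩
  · rw [idw, abs_of_nonneg (by positivity)]; simp
  · simp [idw, sg_one (show (0:ℤ) ≤ (j:ℤ) + 1 by positivity)]

lemma negFirst_apply (y : Fin (n+2) → ℤ) (j : Fin (n+2)) :
    negFirst n y j = if j = 0 then -(y j) else y j := rfl

lemma swapCoord_apply (i : Fin (n+1)) (y : Fin (n+2) → ℤ) (j : Fin (n+2)) :
    swapCoord n i y j = y (Equiv.swap i.castSucc i.succ j) := by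
  simp [swapCoord, Equiv.arrowCongr]

lemma rel_negFirst {w : Equiv.Perm (Fin (n+2) → ℤ)} {v : Fin (n+2) → ℤ}
    (h : Rel w v) : Rel (negFirst n * w) (t0 v) := by
  have hv0 : v 0 ≠ 0 := h.wn.ne_zero 0
  obtain ⟨σ, hab, hw⟩ := h
  refine ⟨σ, fun j => ?_, fun x j => ?_⟩
  · simp only [t0]; split_ifs with hj
    · subst hj; rw [abs_neg]; exact hab 0
    · exact hab j
  · rw [Equiv.Perm.mul_apply, negFirst_apply]
    simp only [t0]
    split_ifs with hj
    · subst hj; rw [hw, sg_neg hv0]; ring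
    · exact hw x j

lemma rel_swap {w : Equiv.Perm (Fin (n+2) → ℤ)} {v : Fin (n+2) → ℤ}
    (h : Rel w v) (i : Fin (n+1)) : Rel (swapCoord n i * w) (swop i v) := by
  obtain ⟨σ, hab, hw⟩ := h
  refine ⟨(Equiv.swap i.castSucc i.succ).trans σ, fun j => hab _, fun x j => ?_⟩
  rw [Equiv.Perm.mul_apply, swapCoord_apply, hw]
  rfl

lemma dGen_zero : dGen n 0 = negFirst n * swapCoord n 0 * negFirst n := by simp [dGen]
lemma dGen_succ (i : Fin (n+1)) : dGen n i.succ = swapCoord n i := by simp [dGen]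
lemma bGen_zero : bGen n 0 = negFirst n := by simp [bGen]
lemma bGen_succ (i : Fin (n+1)) : bGen n i.succ = swapCoord n i := by simp [bGen]
lemma bGen_one : bGen n 1 = swapCoord n 0 := by
  rw [← Fin.succ_zero_eq_one, bGen_succ]

lemma expandD_zero : expandD n 0 = [0, 1, 0] := by simp [expandD]
lemma expandD_succ (i : Fin (n+1)) : expandD n i.succ = [i.succ] := by simp [expandD]

lemma rel_dgen0 {w : Equiv.Perm (Fin (n+2) → ℤ)} {v : Fin (n+2) → ℤ}
    (h : Rel w v) : Rel (dGen n 0 * w) (s0op v) := by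
  have h3 := rel_negFirst (rel_swap (rel_negFirst h) 0)
  have hgrp : dGen n 0 * w = negFirst n * (swapCoord n 0 * (negFirst n * w)) := by
    rw [dGen_zero, mul_assoc, mul_assoc]
  have hwin : t0 (swop 0 (t0 v)) = s0op v := by
    funext j
    have hc0 : (0 : Fin (n+1)).castSucc = (0 : Fin (n+2)) := rfl
    have hs0 : (0 : Fin (n+1)).succ = (1 : Fin (n+2)) := Fin.succ_zero_eq_one
    by_cases hj0 : j = 0
    · subst hj0
      simp only [t0, swop, Function.comp_apply, s0op, if_pos rfl, hc0, hs0,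
        Equiv.swap_apply_left]
      rw [if_neg fin_ne10]
      simp
    · by_cases hj1 : j = 1
      · subst hj1
        simp only [t0, swop, Function.comp_apply, s0op, if_neg fin_ne10, if_pos rfl,
          hc0, hs0, Equiv.swap_apply_right]
        simp [fin_ne10]
      · simp only [t0, swop, Function.comp_apply, s0op, if_neg hj0, if_neg hj1, hc0, hs0]
        rw [Equiv.swap_apply_of_ne_of_ne hj0 hj1, if_neg hj0]
  rw [hgrp, ← hwin]
  exact h3

lemma rel_unique {w : Equiv.Perm (Fin (n+2) → ℤ)} {v v' : Fin (n+2) → ℤ}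
    (h : Rel w v) (h' : Rel w v') : v = v' := by
  obtain ⟨σ, hab, hw⟩ := h
  obtain ⟨σ', hab', hw'⟩ := h'
  funext j
  have e1 := hw (fun t => if t = σ j then (1:ℤ) else 0) j
  have e2 := hw' (fun t => if t = σ j then (1:ℤ) else 0) j
  rw [if_pos rfl, mul_one] at e1
  rw [e1] at e2
  by_cases hσ : σ' j = σ j
  · rw [if_pos hσ, mul_one] at e2
    calc v j = sg (v j) * |v j| := (sg_mul_abs _).symm
      _ = sg (v' j) * |v' j| := by rw [e2, hab j, hab' j, hσ]
      _ = v' j := sg_mul_abs _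
  · rw [if_neg hσ, mul_zero] at e2
    exact absurd e2 (sg_ne_zero _)


lemma rel_idw_one {w : Equiv.Perm (Fin (n+2) → ℤ)} (h : Rel w idw) : w = 1 := by
  obtain ⟨σ, hab, hw⟩ := h
  have hσ : ∀ j, σ j = j := by
    intro j
    have h1 := hab j
    rw [idw, abs_of_nonneg (by positivity)] at h1
    have h2 : ((j:ℕ):ℤ) = ((σ j : ℕ):ℤ) := by omega
    exact (Fin.ext (by exact_mod_cast h2)).symm
  apply Equiv.ext; intro x; funext j
  rw [hw, hσ, sg_one (show (0:ℤ) ≤ idw j by rw [idw]; positivity), one_mul]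
  rfl

lemma inv_idw : inv (idw : Fin (n+2) → ℤ) = 0 :=
  Finset.sum_eq_zero fun p _ => ind_false (by
    rintro ⟨h1, h2⟩
    simp only [idw] at h2
    have h3 : (p.1 : ℕ) < (p.2 : ℕ) := Fin.lt_def.mp h1
    omega)

lemma negsm_idw : negsm (idw : Fin (n+2) → ℤ) = 0 :=
  Finset.sum_eq_zero fun j _ => mterm_nonneg (by simp only [idw]; positivity)

lemma negc_idw : negc (idw : Fin (n+2) → ℤ) = 0 :=
  Finset.sum_eq_zero fun j _ => ind_false (by simp only [idw]; omega)

lemma lD_idw : lD (idw : Fin (n+2) → ℤ) = 0 := by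
  rw [lD, inv_idw, negsm_idw]

lemma lB_idw : lB (idw : Fin (n+2) → ℤ) = 0 := by
  rw [lB, inv_idw, negsm_idw, negc_idw]

lemma negFirst_sq : negFirst n * negFirst n = 1 := by
  apply Equiv.ext; intro x; funext j
  rw [Equiv.Perm.mul_apply, negFirst_apply, negFirst_apply]
  split_ifs <;> simp

lemma swapCoord_sq (i : Fin (n+1)) : swapCoord n i * swapCoord n i = 1 := by
  apply Equiv.ext; intro x; funext j
  rw [Equiv.Perm.mul_apply, swapCoord_apply, swapCoord_apply, Equiv.swap_apply_self]
  rfl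

lemma aba {G : Type*} [Group G] {a b : G} (ha : a*a = 1) (hb : b*b = 1) :
    (a*b*a)*(a*b*a) = 1 := by
  have h1 : (a*b*a)*(a*b*a) = a*(b*((a*a)*(b*a))) := by group
  rw [h1, ha, one_mul, show b*(b*a) = (b*b)*a from (mul_assoc b b a).symm, hb, one_mul, ha]

lemma dGen_sq (i : Fin (n+2)) : dGen n i * dGen n i = 1 := by
  induction i using Fin.cases with
  | zero => rw [dGen_zero]; exact aba negFirst_sq (swapCoord_sq 0)
  | succ i => rw [dGen_succ]; exact swapCoord_sq i

lemma bGen_sq (i : Fin (n+2)) : bGen n i * bGen n i = 1 := by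
  induction i using Fin.cases with
  | zero => rw [bGen_zero]; exact negFirst_sq
  | succ i => rw [bGen_succ]; exact swapCoord_sq i

lemma rev_word (l : List (Fin (n+2))) :
    ((l.reverse.map (dGen n)).prod) * ((l.map (dGen n)).prod) = 1 := by
  induction l with
  | nil => simp
  | cons a l ih =>
    simp only [List.reverse_cons, List.map_append, List.prod_append, List.map_cons,
      List.prod_cons, List.map_nil, List.prod_nil, mul_one]
    calc (l.reverse.map (dGen n)).prod * dGen n a * (dGen n a * (l.map (dGen n)).prod)
        = (l.reverse.map (dGen n)).prod * ((dGen n a * dGen n a) * (l.map (dGen n)).prod) := by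
          group
      _ = 1 := by rw [dGen_sq, one_mul, ih]

lemma exists_word {w : Equiv.Perm (Fin (n+2) → ℤ)}
    (hw : w ∈ Subgroup.closure (Set.range (dGen n))) :
    ∃ l : List (Fin (n+2)), (l.map (dGen n)).prod = w := by
  induction hw using Subgroup.closure_induction with
  | mem x hx => obtain ⟨i, rfl⟩ := hx; exact ⟨[i], by simp⟩
  | one => exact ⟨[], by simp⟩
  | mul x y hx hy ihx ihy =>
    obtain ⟨l1, hl1⟩ := ihx; obtain ⟨l2, hl2⟩ := ihy
    exact ⟨l1 ++ l2, by rw [List.map_append, List.prod_append, hl1, hl2]⟩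
  | inv x hx ihx =>
    obtain ⟨l, hl⟩ := ihx
    exact ⟨l.reverse, by rw [← hl]; exact eq_inv_of_mul_eq_one_left (rev_word l)⟩

lemma expand_prod (l : List (Fin (n+2))) :
    ((l.flatMap (expandD n)).map (bGen n)).prod = (l.map (dGen n)).prod := by
  induction l with
  | nil => simp
  | cons i l ih =>
    rw [List.flatMap_cons, List.map_append, List.prod_append, ih, List.map_cons,
      List.prod_cons]
    congr 1
    induction i using Fin.cases with
    | zero =>
      rw [expandD_zero, dGen_zero]
      simp only [List.map_cons, List.prod_cons, List.map_nil, List.prod_nil, mul_one,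
        bGen_zero, bGen_one, mul_assoc]
    | succ j =>
      rw [expandD_succ, dGen_succ]
      simp [bGen_succ]

lemma lB_sw_le {v : Fin (n+2) → ℤ} (hW : Wn v) (i : Fin (n+1)) :
    lB (swop i v) ≤ lB v + 1 := by
  have hne : v i.castSucc ≠ v i.succ := fun he =>
    hW.abs_ne (ne_of_lt ((Fin.castSucc_lt_succ : i.castSucc < i.succ))) (by rw [he])
  rcases lt_or_gt_of_ne hne with h | h
  · exact le_of_eq (sw_asc h).2
  · have := (sw_desc h).2; omega

lemma lD_sw_le {v : Fin (n+2) → ℤ} (hW : Wn v) (i : Fin (n+1)) :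
    lD (swop i v) ≤ lD v + 1 := by
  have hne : v i.castSucc ≠ v i.succ := fun he =>
    hW.abs_ne (ne_of_lt ((Fin.castSucc_lt_succ : i.castSucc < i.succ))) (by rw [he])
  rcases lt_or_gt_of_ne hne with h | h
  · exact le_of_eq (sw_asc h).1
  · have := (sw_desc h).1; omega

lemma lbB (L : List (Fin (n+2))) :
    ∃ v, Rel ((L.map (bGen n)).prod) v ∧ lB v ≤ L.length := by
  induction L with
  | nil => exact ⟨idw, by simpa using rel_one, by simp [lB_idw]⟩
  | cons i L ih =>
    obtain ⟨v, hv, hlen⟩ := ih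
    rw [List.map_cons, List.prod_cons]
    induction i using Fin.cases with
    | zero =>
      refine ⟨t0 v, ?_, ?_⟩
      · rw [bGen_zero]; exact rel_negFirst hv
      · have := lB_t0_le hv.wn
        simp only [List.length_cons]; omega
    | succ j =>
      refine ⟨swop j v, ?_, ?_⟩
      · rw [bGen_succ]; exact rel_swap hv j
      · have := lB_sw_le hv.wn j
        simp only [List.length_cons]; omega

lemma lbD (l : List (Fin (n+2))) :
    ∃ v, Rel ((l.map (dGen n)).prod) v ∧ Even (negc v) ∧ lD v ≤ l.length := by
  induction l with
  | nil => exact ⟨idw, by simpa using rel_one, by simp [negc_idw], by simp [lD_idw]⟩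
  | cons i l ih =>
    obtain ⟨v, hv, hev, hlen⟩ := ih
    rw [List.map_cons, List.prod_cons]
    induction i using Fin.cases with
    | zero =>
      refine ⟨s0op v, rel_dgen0 hv, ?_, ?_⟩
      · exact ((lD_s0_le hv.wn).2).mpr hev
      · have := (lD_s0_le hv.wn).1
        have h2 : lD (s0op v) ≤ lD v + 1 := by
          have h3 := lD_s0_le (hv.wn.s0op)
          rw [s0op_s0op] at h3
          omega
        simp only [List.length_cons]; omega
    | succ j =>
      refine ⟨swop j v, ?_, ?_, ?_⟩
      · rw [dGen_succ]; exact rel_swap hv j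
      · rwa [negc_swop]
      · have := lD_sw_le hv.wn j
        simp only [List.length_cons]; omega


lemma le_apply_aux {m : ℕ} {f : Fin m → Fin m} (hf : StrictMono f) :
    ∀ j : Fin m, (j : ℕ) ≤ (f j : ℕ) := by
  suffices H : ∀ k, ∀ j : Fin m, (j:ℕ) = k → (j:ℕ) ≤ (f j : ℕ) by
    intro j; exact H _ j rfl
  intro k
  induction k with
  | zero => intro j h; omega
  | succ k IH =>
    intro j hj
    have hk : k < m := by have := j.isLt; omega
    have hj' : (⟨k, hk⟩ : Fin m) < j := by rw [Fin.lt_def]; simp; omega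
    have h1 := IH ⟨k, hk⟩ rfl
    have h2 : f ⟨k, hk⟩ < f j := hf hj'
    rw [Fin.lt_def] at h2
    simp at h1
    omega

lemma perm_strictMono_eq {σ : Equiv.Perm (Fin (n+2))}
    (h : StrictMono (fun j : Fin (n+2) => σ j)) : ∀ j, σ j = j := by
  have h1 := le_apply_aux h
  have hsymm : StrictMono (fun j : Fin (n+2) => σ.symm j) := by
    intro a b hab
    rcases lt_trichotomy (σ.symm a) (σ.symm b) with hh | hh | hh
    · exact hh
    · exfalso
      have : a = b := by
        have := congrArg σ hh; simpa using this
      exact absurd hab (by rw [this]; exact lt_irrefl b)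
    · exfalso
      have := h hh
      simp only [Equiv.apply_symm_apply] at this
      exact absurd hab (not_lt.mpr (le_of_lt this))
  have h2 := le_apply_aux hsymm
  intro j
  apply Fin.ext
  have ha := h1 j
  have hb := h2 (σ j)
  simp only [Equiv.symm_apply_apply] at hb
  omega

lemma mono_pos_idw {v : Fin (n+2) → ℤ} (hW : Wn v) (hm : StrictMono v) (h0 : 0 < v 0) :
    v = idw := by
  obtain ⟨σ, hab⟩ := hW
  have hpos : ∀ j, 0 < v j := fun j => lt_of_lt_of_le h0 (hm.monotone (Fin.zero_le j))
  have hv : ∀ j, v j = (σ j : ℤ) + 1 := fun j => by rw [← abs_of_pos (hpos j), hab]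
  have hσ : StrictMono (fun j : Fin (n+2) => σ j) := by
    intro a b hab2
    have hva : v a < v b := hm hab2
    rw [hv, hv] at hva
    have h3 : ((σ a : ℕ):ℤ) < ((σ b:ℕ):ℤ) := by omega
    exact Fin.lt_def.mpr (by exact_mod_cast h3)
  funext j
  rw [hv, perm_strictMono_eq hσ j]
  rfl

lemma build : ∀ k : ℕ, ∀ v : Fin (n+2) → ℤ, ∀ w, Rel w v → Even (negc v) → lD v = k →
    ∃ l : List (Fin (n+2)), (l.map (dGen n)).prod = w ∧ l.length = lD v ∧
      (l.flatMap (expandD n)).length = lB v := by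
  intro k
  induction k using Nat.strong_induction_on with
  | _ k IH =>
  intro v w hrel heven hk
  by_cases hdesc : ∃ i : Fin (n+1), v i.succ < v i.castSucc
  · obtain ⟨i, hi⟩ := hdesc
    obtain ⟨hld, hlb⟩ := sw_desc hi
    have hrel' : Rel (swapCoord n i * w) (swop i v) := rel_swap hrel i
    have heven' : Even (negc (swop i v)) := by rwa [negc_swop]
    obtain ⟨l, hl1, hl2, hl3⟩ := IH (lD (swop i v)) (by omega) _ _ hrel' heven' rfl
    refine ⟨i.succ :: l, ?_, ?_, ?_⟩
    · rw [List.map_cons, List.prod_cons, hl1, dGen_succ, ← mul_assoc, swapCoord_sq, one_mul]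
    · simp only [List.length_cons]; omega
    · rw [List.flatMap_cons, expandD_succ]
      simp only [List.length_append, List.length_cons, List.length_nil]
      omega
  · push_neg at hdesc
    have hmono : StrictMono v := by
      rw [Fin.strictMono_iff_lt_succ]
      intro i
      have hne : v i.castSucc ≠ v i.succ := fun he =>
        hrel.wn.abs_ne (ne_of_lt ((Fin.castSucc_lt_succ : i.castSucc < i.succ))) (by rw [he])
      exact lt_of_le_of_ne (hdesc i) hne
    rcases lt_or_gt_of_ne (hrel.wn.ne_zero 0) with h0 | h0
    · have h1 : v 1 < 0 := by
        by_contra hle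
        have h1pos : 0 < v 1 :=
          lt_of_le_of_ne (not_lt.mp hle) (Ne.symm (hrel.wn.ne_zero 1))
        have hc : negc v = 1 := by
          rw [negc, sum1 (fun j => ind (v j < 0)), ind_true h0]
          have hz : ∀ j : Fin (n+1), ind (v j.succ < 0) = 0 := fun j => ind_false (by
            have hle1 : v 1 ≤ v j.succ := hmono.monotone (by
              rw [Fin.le_def]; simp [Fin.val_succ, Fin.val_one])
            omega)
          rw [Finset.sum_congr rfl fun j _ => hz j]
          simp
        rw [hc] at heven
        exact absurd heven (by decide)
      obtain ⟨hld, hlb, hcnt⟩ := s0_nn hrel.wn h0 h1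
      have hrel' := rel_dgen0 hrel
      have heven' : Even (negc (s0op v)) := by
        rw [hcnt] at heven
        rcases heven with ⟨r, hr⟩
        exact ⟨r - 1, by omega⟩
      obtain ⟨l, hl1, hl2, hl3⟩ := IH (lD (s0op v)) (by omega) _ _ hrel' heven' rfl
      refine ⟨0 :: l, ?_, ?_, ?_⟩
      · rw [List.map_cons, List.prod_cons, hl1, ← mul_assoc, dGen_sq, one_mul]
      · simp only [List.length_cons]; omega
      · rw [List.flatMap_cons, expandD_zero]
        simp only [List.length_append, List.length_cons, List.length_nil]
        omega
    · have hv := mono_pos_idw hrel.wn hmono h0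
      subst hv
      refine ⟨[], ?_, ?_, ?_⟩
      · simpa using (rel_idw_one hrel).symm
      · simp [lD_idw]
      · simp [lB_idw]

end St7

/-- If `w` lies in the image `ι(W(D_n))` inside `W(B_n)`, then `w` admits a
reduced expression in the generators `r₀, …, r_{n-1}` of the form `ι(s_{i₁})⋯ι(s_{i_k})`
where `s_{i₁}⋯s_{i_k}` is a reduced expression in `W(D_n)`.  (Reduced means of minimal length
among all words in the respective generators representing `w`.) -/
theorem stmt7 (n : ℕ) (w : Equiv.Perm (Fin (n + 2) → ℤ))
    (hw : w ∈ Subgroup.closure (Set.range (dGen n))) :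
    ∃ l : List (Fin (n + 2)),
      -- `l` is a word in the `D`-generators representing `w`
      (l.map (dGen n)).prod = w ∧
      -- `l` is reduced in `W(D_n)`
      (∀ l' : List (Fin (n + 2)), (l'.map (dGen n)).prod = w → l.length ≤ l'.length) ∧
      -- the expanded word `ι(s_{i₁})⋯ι(s_{i_k})` represents `w` in the `B`-generators
      (((l.flatMap (expandD n)).map (bGen n)).prod = w) ∧
      -- and is reduced in `W(B_n)`
      (∀ L : List (Fin (n + 2)), (L.map (bGen n)).prod = w →
        (l.flatMap (expandD n)).length ≤ L.length) := by
  classical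
  obtain ⟨l₀, hl₀⟩ := St7.exists_word hw
  obtain ⟨v, hv, hev, -⟩ := St7.lbD l₀
  rw [hl₀] at hv
  obtain ⟨l, hprod, hlen, hexp⟩ := St7.build (St7.lD v) v w hv hev rfl
  refine ⟨l, hprod, ?_, ?_, ?_⟩
  · intro l' hl'
    obtain ⟨v', hv', -, hbound⟩ := St7.lbD l'
    rw [hl'] at hv'
    rw [St7.rel_unique hv' hv] at hbound
    omega
  · rw [St7.expand_prod, hprod]
  · intro L hL
    obtain ⟨v', hv', hbound⟩ := St7.lbB L
    rw [hL] at hv'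
    rw [St7.rel_unique hv' hv] at hbound
    omega
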